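/- Let G be a group, T a normal subgroup, and B a subgroup normalizing T such that the commutator subgroup [T, B] is finite of order f. Then every element of B^{f!} commutes with every element of T, i.e., B^{f!} ≤ C_G(T). -/

import Mathlib

open Subgroup
open scoped commutatorElement

private lemma conj_mem_of_norm {G : Type*} [Group G] (T B : Subgroup G) [T.Normal]
    (hBn : B ≤ Subgroup.normalizer (T : Set G)) {x g : G} (hx : x ∈ B)
    (hg : g ∈ (⁅T, B⁆ : Subgroup G)) : x * g * x⁻¹ ∈ (⁅T, B⁆ : Subgroup G) := by
  have hmap : Subgroup.map (MulAut.conj x).toMonoidHom (⁅T, B⁆ : Subgroup G) = ⁅T, B⁆ := by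
    rw [Subgroup.map_commutator]
    have h1 : Subgroup.map (MulAut.conj x).toMonoidHom T = T := by
      ext g
      constructor
      · rintro ⟨a, ha, rfl⟩
        exact ((Subgroup.mem_normalizer_iff.mp (hBn hx)) a).mp ha
      · intro hg
        exact ⟨x⁻¹ * g * x, by
          have := (Subgroup.mem_normalizer_iff.mp (inv_mem (hBn hx))) g
          simpa using this.mp hg, by simp [MulAut.conj_apply]; group⟩
    have h2 : Subgroup.map (MulAut.conj x).toMonoidHom B = B := by
      ext g
      constructor
      · rintro ⟨a, ha, rfl⟩
        simpa [MulAut.conj_apply] using mul_mem (mul_mem hx ha) (inv_mem hx)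
      · intro hg
        exact ⟨x⁻¹ * g * x, mul_mem (mul_mem (inv_mem hx) hg) hx,
          by simp [MulAut.conj_apply]; group⟩
    rw [h1, h2]
  rw [← hmap]
  exact ⟨g, hg, rfl⟩

theorem stmt1 {G : Type*} [Group G] (T B : Subgroup G) [T.Normal]
    (hBn : B ≤ Subgroup.normalizer (T : Set G)) (f : ℕ) (hf : Nat.card ↥(⁅T, B⁆ : Subgroup G) = f)
    (hfin : Finite ↥(⁅T, B⁆ : Subgroup G)) :
    Subgroup.closure {x : G | ∃ b ∈ B, x = b ^ (Nat.factorial f)} ≤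
      Subgroup.centralizer (T : Set G) := by
  classical
  set C : Subgroup G := ⁅T, B⁆ with hC
  have hfpos : 0 < f := hf ▸ Nat.card_pos
  haveI : Fintype ↥C := Fintype.ofFinite _
  have hnorm : ∀ x ∈ B, ∀ g ∈ C, x * g * x⁻¹ ∈ C :=
    fun x hx g hg => conj_mem_of_norm T B hBn hx hg
  -- Step 1: x^((f-1)!) centralizes C
  have step1 : ∀ x ∈ B, ∀ c ∈ C, x ^ (f-1).factorial * c * (x ^ (f-1).factorial)⁻¹ = c := by
    intro x hx c hc
    by_cases hc1 : c = 1
    · simp [hc1]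
    · -- permutation on nonidentity elements of C
      set α := {c : ↥C // c ≠ 1} with hα
      have hcardα : Nat.card α = f - 1 := by
        have h1 : Fintype.card {c : ↥C // c = 1} = 1 := Fintype.card_subtype_eq (1 : ↥C)
        have h2 := Fintype.card_subtype_compl (fun c : ↥C => c = 1)
        simp only [Fintype.card_eq_nat_card] at h1 h2
        rw [h1, hf] at h2
        exact h2
      have hne : ∀ (d : ↥C), d ≠ 1 → (x * (d : G) * x⁻¹ ≠ 1) := by
        intro d hd h1
        apply hd
        apply Subtype.ext
        have : (d : G) = 1 := by
          have := congrArg (fun z => x⁻¹ * z * x) h1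
          simpa [mul_assoc] using this
        simpa using this
      have hnei : ∀ (d : ↥C), d ≠ 1 → (x⁻¹ * (d : G) * x⁻¹⁻¹ ≠ 1) := by
        intro d hd h1
        apply hd
        apply Subtype.ext
        have := congrArg (fun z => x * z * x⁻¹) h1
        simp only [inv_inv] at h1
        have : (d : G) = 1 := by
          have := congrArg (fun z => x * z * x⁻¹) h1
          simpa [mul_assoc] using this
        simpa using this
      set σ : Equiv.Perm α :=
        { toFun := fun d => ⟨⟨x * (d : ↥C) * x⁻¹, hnorm x hx _ (d : ↥C).2⟩,
            fun h => (hne d d.2) (congrArg Subtype.val h)⟩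
          invFun := fun d => ⟨⟨x⁻¹ * (d : ↥C) * x⁻¹⁻¹, hnorm x⁻¹ (inv_mem hx) _ (d : ↥C).2⟩,
            fun h => (hnei d d.2) (congrArg Subtype.val h)⟩
          left_inv := by intro d; ext; simp [mul_assoc]
          right_inv := by intro d; ext; simp [mul_assoc] } with hσ
      have happly : ∀ (n : ℕ) (d : α), (((σ ^ n) d : ↥C) : G) = x ^ n * (d : ↥C) * (x ^ n)⁻¹ := by
        intro n
        induction n with
        | zero => intro d; simp
        | succ n ih =>
          intro d
          have hst : ((σ ^ (n+1)) d) = σ ((σ ^ n) d) := by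
            rw [pow_succ']; rfl
          rw [hst]
          show x * (((σ ^ n) d : ↥C) : G) * x⁻¹ = _
          rw [ih d]
          group
      have hσpow : σ ^ (f-1).factorial = 1 := by
        have hcp : Nat.card (Equiv.Perm α) = (f-1).factorial := by
          rw [← Fintype.card_eq_nat_card, Fintype.card_perm, ← hcardα,
            Fintype.card_eq_nat_card]
        rw [← hcp]
        exact pow_card_eq_one'
      have := happly (f-1).factorial ⟨⟨c, hc⟩, fun h => hc1 (congrArg Subtype.val h)⟩
      rw [hσpow] at this
      simpa using this.symm
  -- Step 2: commutator power identity
  have step2 : ∀ y ∈ B, ∀ t ∈ T, (∀ c ∈ C, y * c * y⁻¹ = c) →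
      ∀ n : ℕ, y ^ n * t * (y ^ n)⁻¹ * t⁻¹ = (y * t * y⁻¹ * t⁻¹) ^ n := by
    intro y hy t ht hcen n
    induction n with
    | zero => simp
    | succ n ih =>
      have hmem : y ^ n * t * (y ^ n)⁻¹ * t⁻¹ ∈ C := by
        have h1 : (⁅t, y ^ n⁆ : G) ∈ C := commutator_mem_commutator ht (pow_mem hy n)
        have : (⁅t, y ^ n⁆ : G)⁻¹ ∈ C := inv_mem h1
        rw [commutatorElement_def] at this
        convert this using 1
        group
      have key : y ^ (n+1) * t * (y ^ (n+1))⁻¹ * t⁻¹ =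
          y * (y ^ n * t * (y ^ n)⁻¹ * t⁻¹) * y⁻¹ * (y * t * y⁻¹ * t⁻¹) := by
        group
      rw [key, hcen _ hmem, ih, pow_succ]
  -- Conclusion
  rw [Subgroup.closure_le]
  rintro x ⟨b, hb, rfl⟩
  rw [SetLike.mem_coe, Subgroup.mem_centralizer_iff]
  intro t ht
  set y : G := b ^ (f-1).factorial with hy
  have hyB : y ∈ B := pow_mem hb _
  have hycen : ∀ c ∈ C, y * c * y⁻¹ = c := step1 b hb
  have hcom := step2 y hyB t ht hycen f
  have hcmem : y * t * y⁻¹ * t⁻¹ ∈ C := by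
    have h1 : (⁅t, y⁆ : G) ∈ C := commutator_mem_commutator ht hyB
    have : (⁅t, y⁆ : G)⁻¹ ∈ C := inv_mem h1
    rw [commutatorElement_def] at this
    convert this using 1
    group
  have hcpow : (y * t * y⁻¹ * t⁻¹) ^ f = 1 := by
    have : ((⟨_, hcmem⟩ : ↥C) : G) ^ f = 1 := by
      rw [← Subgroup.coe_pow]
      norm_cast
      rw [← hf]
      exact pow_card_eq_one'
    simpa using this
  have hfact : b ^ f.factorial = y ^ f := by
    rw [hy, ← pow_mul, ← Nat.mul_factorial_pred hfpos.ne', mul_comm]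
  rw [hfact]
  have h1 : y ^ f * t * (y ^ f)⁻¹ * t⁻¹ = 1 := by rw [hcom, hcpow]
  have := congrArg (fun z => z * t * y ^ f) h1
  simp only [one_mul] at this
  calc t * y ^ f = y ^ f * t * (y ^ f)⁻¹ * t⁻¹ * t * y ^ f := by rw [h1]; group
    _ = y ^ f * t := by group
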